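/- arXiv:2603.21952 — 4 statements merged into one kernel-verified Lean document; each statement's English description precedes it below -/
import Mathlib

section
/- Let ν_max denote the largest eigenvalue of the symmetric positive semidefinite matrix XᵀX. If δ ≥ ν_max/(8n), then for every fixed (β₀, β) ∈ ℝ × ℝ^p and every λ ≥ 0, the map t ↦ h_{δ,λ}(t, β₀, β) is concave on [0,1]^p. -/
lemma qconv : ConvexOn ℝ Set.univ (fun u : ℝ => u^2/8 - Real.log (1 + Real.exp u)) := by
  have key : ∀ u : ℝ, 0 < 1 + Real.exp u := fun u => by positivity
  have hd1 : ∀ u : ℝ, HasDerivAt (fun u : ℝ => u^2/8 - Real.log (1 + Real.exp u))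
      (u/4 - Real.exp u / (1 + Real.exp u)) u := by
    intro u
    have h1 : HasDerivAt (fun u : ℝ => u^2/8) (u/4) u := by
      have := (hasDerivAt_pow 2 u).div_const 8
      exact this.congr_deriv (by norm_num; ring)
    have h2 : HasDerivAt (fun u : ℝ => Real.log (1 + Real.exp u))
        (Real.exp u / (1 + Real.exp u)) u :=
      (((Real.hasDerivAt_exp u).const_add 1)).log (ne_of_gt (key u))
    exact h1.sub h2
  have hd2 : ∀ u : ℝ, HasDerivAt (fun u : ℝ => u/4 - Real.exp u / (1 + Real.exp u))
      (1/4 - Real.exp u / (1 + Real.exp u)^2) u := by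
    intro u
    have h1 : HasDerivAt (fun u : ℝ => u/4) (1/4 : ℝ) u := by
      simpa using (hasDerivAt_id u).div_const 4
    have h2 : HasDerivAt (fun u : ℝ => Real.exp u / (1 + Real.exp u))
        ((Real.exp u * (1 + Real.exp u) - Real.exp u * Real.exp u) / (1 + Real.exp u)^2) u :=
      (Real.hasDerivAt_exp u).div ((Real.hasDerivAt_exp u).const_add 1) (ne_of_gt (key u))
    have : (Real.exp u * (1 + Real.exp u) - Real.exp u * Real.exp u) / (1 + Real.exp u)^2
        = Real.exp u / (1 + Real.exp u)^2 := by ring_nf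
    rw [this] at h2
    exact h1.sub h2
  have hderiv : deriv (fun u : ℝ => u^2/8 - Real.log (1 + Real.exp u))
      = fun u : ℝ => u/4 - Real.exp u / (1 + Real.exp u) := funext fun u => (hd1 u).deriv
  apply convexOn_of_deriv2_nonneg convex_univ
  · apply Continuous.continuousOn
    exact (by fun_prop : Continuous fun u : ℝ => u^2/8).sub
      (((continuous_const.add Real.continuous_exp).log (fun u => ne_of_gt (key u))))
  · intro u _; exact (hd1 u).differentiableAt.differentiableWithinAt
  · intro u _
    rw [hderiv]
    exact (hd2 u).differentiableAt.differentiableWithinAt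
  · intro u _
    have : deriv (deriv (fun u : ℝ => u^2/8 - Real.log (1 + Real.exp u))) u
        = 1/4 - Real.exp u / (1 + Real.exp u)^2 := by rw [hderiv]; exact (hd2 u).deriv
    simp only [Function.iterate_succ, Function.iterate_zero, Function.comp_apply, id]
    rw [this]
    have h := key u
    have he := Real.exp_pos u
    rw [sub_nonneg, div_le_iff₀ (by positivity)]
    nlinarith [sq_nonneg (1 - Real.exp u)]

lemma ell_bound (u v a b : ℝ) (ha : 0 ≤ a) (hb : 0 ≤ b) (hab : a + b = 1) :
    a * Real.log (1 + Real.exp u) + b * Real.log (1 + Real.exp v)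
      ≤ Real.log (1 + Real.exp (a*u + b*v)) + a*b/8*(u-v)^2 := by
  have h := qconv.2 (Set.mem_univ u) (Set.mem_univ v) ha hb hab
  simp only [smul_eq_mul] at h
  have hid : a*(u^2/8) + b*(v^2/8) - (a*u+b*v)^2/8 = a*b/8*(u-v)^2 := by
    have hb' : b = 1 - a := by linarith
    subst hb'; ring
  nlinarith [h, hid]

open Matrix in
lemma quad_bound {n p : ℕ} (X : Matrix (Fin n) (Fin p) ℝ)
    (hH : (Xᵀ * X).IsHermitian) (w : Fin p → ℝ) :
    ∑ i, (∑ j, X i j * w j)^2 ≤ (⨆ i, hH.eigenvalues i) * ∑ j, (w j)^2 := by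
  classical
  set U : Matrix (Fin p) (Fin p) ℝ := (hH.eigenvectorUnitary : Matrix (Fin p) (Fin p) ℝ) with hU
  set z : Fin p → ℝ := (star U) *ᵥ w with hz
  have hUU : U * star U = 1 := (Matrix.mem_unitaryGroup_iff).mp hH.eigenvectorUnitary.2
  have h1 : ∑ i, (∑ j, X i j * w j)^2 = w ⬝ᵥ ((Xᵀ * X) *ᵥ w) := by
    simp only [dotProduct, Matrix.mulVec, Matrix.mul_apply, Matrix.transpose_apply,
      dotProduct, Finset.mul_sum, Finset.sum_mul, sq]
    rw [Finset.sum_comm]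
    refine Finset.sum_congr rfl fun i _ => ?_
    rw [Finset.sum_comm]
    refine Finset.sum_congr rfl fun j _ => ?_
    refine Finset.sum_congr rfl fun k _ => ?_
    ring
  have h2 : w ⬝ᵥ ((Xᵀ * X) *ᵥ w) = ∑ k, hH.eigenvalues k * (z k)^2 := by
    conv_lhs => rw [hH.spectral_theorem, Unitary.conjStarAlgAut_apply]
    rw [← Matrix.mulVec_mulVec, ← Matrix.mulVec_mulVec, Matrix.dotProduct_mulVec]
    have hwU : w ᵥ* U = z := by
      rw [hz, Matrix.star_eq_conjTranspose, Matrix.conjTranspose_eq_transpose_of_trivial,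
        Matrix.mulVec_transpose]
    rw [hwU]
    simp [dotProduct, Matrix.mulVec_diagonal, sq]
    refine Finset.sum_congr rfl fun k _ => ?_
    ring
  have h3 : ∑ k, (z k)^2 = ∑ j, (w j)^2 := by
    have hzz : z ⬝ᵥ z = w ⬝ᵥ w := by
      conv_lhs => rw [hz, Matrix.dotProduct_mulVec]
      have : z ᵥ* (star U) = w := by
        rw [Matrix.star_eq_conjTranspose, Matrix.conjTranspose_eq_transpose_of_trivial,
          Matrix.vecMul_transpose, hz, Matrix.mulVec_mulVec, hUU, Matrix.one_mulVec]
      rw [this]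
    simpa [dotProduct, sq] using hzz
  rw [h1, h2, ← h3, Finset.mul_sum]
  refine Finset.sum_le_sum fun k _ => ?_
  have hb : BddAbove (Set.range hH.eigenvalues) := Set.Finite.bddAbove (Set.finite_range _)
  exact mul_le_mul_of_nonneg_right (le_ciSup hb k) (sq_nonneg _)

/-- Logistic negative log-likelihood
`L(β₀, β) = (1/n) Σ_i [log(1 + exp(β₀ + ⟨x_i, β⟩)) − y_i (β₀ + ⟨x_i, β⟩)]`. -/
noncomputable def negLogLik (n p : ℕ) (X : Matrix (Fin n) (Fin p) ℝ) (y : Fin n → ℝ)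
    (β0 : ℝ) (β : Fin p → ℝ) : ℝ :=
  (1 / (n : ℝ)) * ∑ i, (Real.log (1 + Real.exp (β0 + ∑ j, X i j * β j))
      - y i * (β0 + ∑ j, X i j * β j))

/-- Relaxed objective
`h_{δ,λ}(t, β₀, β) = L(β₀, t ⊙ β) + λ‖β‖₂² + δ Σ_j (1 − t_j²) β_j²`. -/
noncomputable def hObj (n p : ℕ) (X : Matrix (Fin n) (Fin p) ℝ) (y : Fin n → ℝ)
    (δ lam : ℝ) (t : Fin p → ℝ) (β0 : ℝ) (β : Fin p → ℝ) : ℝ :=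
  negLogLik n p X y β0 (fun j => t j * β j) + lam * ∑ j, (β j) ^ 2
    + δ * ∑ j, (1 - (t j) ^ 2) * (β j) ^ 2

/-- Value function `f_{δ,λ}(t) = inf_{(β₀,β)} h_{δ,λ}(t, β₀, β)`. -/
noncomputable def fVal (n p : ℕ) (X : Matrix (Fin n) (Fin p) ℝ) (y : Fin n → ℝ)
    (δ lam : ℝ) (t : Fin p → ℝ) : ℝ :=
  ⨅ b : ℝ × (Fin p → ℝ), hObj n p X y δ lam t b.1 b.2

open Matrix in
/-- if `δ ≥ ν_max/(8n)`, where `ν_max` is the largest eigenvalue of the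
symmetric positive semidefinite matrix `XᵀX`, then for every fixed `(β₀, β)` and every
`λ ≥ 0`, the map `t ↦ h_{δ,λ}(t, β₀, β)` is concave on `[0,1]^p`. -/
theorem stmt2 (n p : ℕ) (hn : 1 ≤ n) (hp : 1 ≤ p)
    (X : Matrix (Fin n) (Fin p) ℝ) (y : Fin n → ℝ) (hy : ∀ i, y i = 0 ∨ y i = 1)
    (hH : (Xᵀ * X).IsHermitian)
    (δ : ℝ) (hδ : (⨆ i, hH.eigenvalues i) / (8 * (n : ℝ)) ≤ δ)
    (lam : ℝ) (hlam : 0 ≤ lam)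
    (β0 : ℝ) (β : Fin p → ℝ) :
    ConcaveOn ℝ {t : Fin p → ℝ | ∀ j, 0 ≤ t j ∧ t j ≤ 1}
      (fun t => hObj n p X y δ lam t β0 β) := by
  have hn0 : (0:ℝ) < n := by exact_mod_cast hn
  constructor
  · -- convexity of the box
    intro x hx y hy' a b ha hb hab j
    have h1 := hx j
    have h2 := hy' j
    simp only [Pi.add_apply, Pi.smul_apply, smul_eq_mul]
    constructor <;> nlinarith [h1.1, h1.2, h2.1, h2.2]
  intro x hx yv hyv a b ha hb hab
  simp only [hObj, negLogLik, smul_eq_mul, Pi.add_apply, Pi.smul_apply]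
  -- abbreviations
  set gx : Fin n → ℝ := fun i => β0 + ∑ j, X i j * (x j * β j) with hgx
  set gy : Fin n → ℝ := fun i => β0 + ∑ j, X i j * (yv j * β j) with hgy
  have key1 : ∀ i, β0 + ∑ j, X i j * ((a * x j + b * yv j) * β j) = a * gx i + b * gy i := by
    intro i
    have hs : ∑ j, X i j * ((a * x j + b * yv j) * β j)
        = a * ∑ j, X i j * (x j * β j) + b * ∑ j, X i j * (yv j * β j) := by
      rw [Finset.mul_sum, Finset.mul_sum, ← Finset.sum_add_distrib]
      exact Finset.sum_congr rfl fun j _ => by ring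
    rw [hs, hgx, hgy]
    linear_combination β0 * hab.symm
  have hzsum : ∑ i, (Real.log (1 + Real.exp (β0 + ∑ j, X i j * ((a * x j + b * yv j) * β j)))
        - y i * (β0 + ∑ j, X i j * ((a * x j + b * yv j) * β j)))
      = ∑ i, (Real.log (1 + Real.exp (a * gx i + b * gy i)) - y i * (a * gx i + b * gy i)) :=
    Finset.sum_congr rfl fun i _ => by rw [key1 i]
  rw [hzsum]
  -- logistic sum bound
  have sum1 : ∑ i, (a * (Real.log (1 + Real.exp (gx i)) - y i * gx i)
        + b * (Real.log (1 + Real.exp (gy i)) - y i * gy i))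
      ≤ ∑ i, ((Real.log (1 + Real.exp (a * gx i + b * gy i)) - y i * (a * gx i + b * gy i))
        + a*b/8 * (gx i - gy i)^2) := by
    refine Finset.sum_le_sum fun i _ => ?_
    have := ell_bound (gx i) (gy i) a b ha hb hab
    nlinarith [this]
  rw [Finset.sum_add_distrib] at sum1
  rw [Finset.sum_add_distrib, ← Finset.mul_sum, ← Finset.mul_sum, ← Finset.mul_sum] at sum1
  -- quadratic bound
  have hq0 : ∑ i, (gx i - gy i)^2 = ∑ i, (∑ j, X i j * ((x j - yv j) * β j))^2 := by
    refine Finset.sum_congr rfl fun i _ => ?_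
    have : gx i - gy i = ∑ j, X i j * ((x j - yv j) * β j) := by
      rw [hgx, hgy]
      simp only [add_sub_add_left_eq_sub, ← Finset.sum_sub_distrib]
      exact Finset.sum_congr rfl fun j _ => by ring
    rw [this]
  have hq : ∑ i, (gx i - gy i)^2
      ≤ (⨆ i, hH.eigenvalues i) * ∑ j, ((x j - yv j) * β j)^2 := by
    rw [hq0]; exact quad_bound X hH _
  -- delta part
  have hdelta : ∑ j, (1 - (a * x j + b * yv j)^2) * (β j)^2
      = a * ∑ j, (1 - (x j)^2) * (β j)^2 + b * ∑ j, (1 - (yv j)^2) * (β j)^2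
        + a * b * ∑ j, ((x j - yv j) * β j)^2 := by
    rw [Finset.mul_sum, Finset.mul_sum, Finset.mul_sum, ← Finset.sum_add_distrib,
      ← Finset.sum_add_distrib]
    refine Finset.sum_congr rfl fun j _ => ?_
    have hb' : b = 1 - a := by linarith
    subst hb'; ring
  rw [hdelta]
  -- final assembly
  set P := ∑ i, (Real.log (1 + Real.exp (gx i)) - y i * gx i) with hP
  set Q := ∑ i, (Real.log (1 + Real.exp (gy i)) - y i * gy i) with hQ
  set R := ∑ i, (Real.log (1 + Real.exp (a * gx i + b * gy i)) - y i * (a * gx i + b * gy i)) with hR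
  set D := ∑ i, (gx i - gy i)^2 with hD
  set W := ∑ j, ((x j - yv j) * β j)^2 with hW
  set S := ∑ j, (β j)^2 with hS
  set Dx := ∑ j, (1 - (x j)^2) * (β j)^2 with hDx
  set Dy := ∑ j, (1 - (yv j)^2) * (β j)^2 with hDy
  have hW0 : 0 ≤ W := Finset.sum_nonneg fun j _ => sq_nonneg _
  have hnu : (⨆ i, hH.eigenvalues i) ≤ 8 * n * δ := by
    rw [div_le_iff₀ (by positivity)] at hδ
    linarith
  have step1 : a*b/8 * D ≤ (n:ℝ) * δ * (a*b*W) := by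
    have h2 : D ≤ 8 * n * δ * W :=
      le_trans hq (mul_le_mul_of_nonneg_right hnu hW0)
    have hab8 : 0 ≤ a*b/8 := by positivity
    nlinarith [mul_le_mul_of_nonneg_left h2 hab8]
  have step2 : a * P + b * Q ≤ R + (n:ℝ) * δ * (a*b*W) := le_trans sum1 (by linarith)
  have step3 : (1/(n:ℝ)) * (a * P + b * Q) ≤ (1/(n:ℝ)) * R + δ * (a*b*W) := by
    have h := mul_le_mul_of_nonneg_left step2 (le_of_lt (one_div_pos.mpr hn0))
    have hne : (n:ℝ) ≠ 0 := ne_of_gt hn0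
    calc (1/(n:ℝ)) * (a * P + b * Q) ≤ (1/(n:ℝ)) * (R + (n:ℝ) * δ * (a*b*W)) := h
      _ = (1/(n:ℝ)) * R + δ * (a*b*W) := by field_simp
  have e1 : a * (1/(n:ℝ) * P + lam*S + δ*Dx) + b * (1/(n:ℝ) * Q + lam*S + δ*Dy)
      = (1/(n:ℝ)) * (a*P + b*Q) + lam*S + (δ*(a*Dx) + δ*(b*Dy)) := by
    linear_combination (lam*S) * hab
  have e2 : (1/(n:ℝ)) * R + lam*S + δ*(a*Dx + b*Dy + a*b*W)
      = (1/(n:ℝ)) * R + δ*(a*b*W) + lam*S + (δ*(a*Dx) + δ*(b*Dy)) := by ring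
  linarith [e1, e2, step3]
end

section
/- Let ν_max denote the largest eigenvalue of XᵀX. If δ ≥ ν_max/(8n), then for every λ ≥ 0 the value function f_{δ,λ}(t) = inf_{(β₀,β)} h_{δ,λ}(t, β₀, β) is concave on [0,1]^p. -/
section Aux
open Matrix Set Real

noncomputable def psiAux (z : ℝ) : ℝ := Real.log (1 + Real.exp z) - z ^ 2 / 8

lemma psi_hasDeriv (z : ℝ) :
    HasDerivAt psiAux (Real.exp z / (1 + Real.exp z) - z / 4) z := by
  have h1 : HasDerivAt (fun z : ℝ => 1 + Real.exp z) (Real.exp z) z :=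
    (Real.hasDerivAt_exp z).const_add 1
  have hne : (1 + Real.exp z) ≠ 0 := by positivity
  have h2 : HasDerivAt (fun z : ℝ => Real.log (1 + Real.exp z))
      (Real.exp z / (1 + Real.exp z)) z := h1.log hne
  have h3 : HasDerivAt (fun z : ℝ => z ^ 2 / 8) (z / 4) z := by
    have := (hasDerivAt_pow 2 z).div_const 8
    exact this.congr_deriv (by norm_num; ring)
  exact h2.sub h3

lemma psi_deriv : deriv psiAux = fun z => Real.exp z / (1 + Real.exp z) - z / 4 :=
  funext fun z => (psi_hasDeriv z).deriv

lemma psi_deriv2 (z : ℝ) :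
    HasDerivAt (deriv psiAux)
      ((Real.exp z * (1 + Real.exp z) - Real.exp z * Real.exp z) / (1 + Real.exp z) ^ 2 - 1 / 4)
      z := by
  rw [psi_deriv]
  have hne : (1 + Real.exp z) ≠ 0 := by positivity
  have h1 : HasDerivAt (fun z : ℝ => Real.exp z / (1 + Real.exp z))
      ((Real.exp z * (1 + Real.exp z) - Real.exp z * Real.exp z) / (1 + Real.exp z) ^ 2) z :=
    (Real.hasDerivAt_exp z).div ((Real.hasDerivAt_exp z).const_add 1) hne
  have h2 : HasDerivAt (fun z : ℝ => z / 4) (1 / 4) z := by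
    simpa using (hasDerivAt_id z).div_const 4
  exact h1.sub h2

lemma psi_concave : ConcaveOn ℝ Set.univ psiAux := by
  apply concaveOn_univ_of_deriv2_nonpos
  · exact fun z => (psi_hasDeriv z).differentiableAt
  · exact fun z => (psi_deriv2 z).differentiableAt
  · intro z
    have : deriv^[2] psiAux z = deriv (deriv psiAux) z := by
      simp [Function.iterate_succ, Function.iterate_one]
    rw [this, (psi_deriv2 z).deriv]
    have h := Real.exp_pos z
    have h2 := sq_nonneg (1 - Real.exp z)
    have hpos : (0:ℝ) < (1 + Real.exp z) ^ 2 := by positivity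
    rw [div_sub_div _ _ (ne_of_gt hpos) (by norm_num : (4:ℝ) ≠ 0), div_nonpos_iff]
    right
    constructor
    · nlinarith
    · positivity


lemma quad_eq (n p : ℕ) (X : Matrix (Fin n) (Fin p) ℝ) (v : Fin p → ℝ) :
    v ⬝ᵥ ((Xᵀ * X) *ᵥ v) = ∑ i, (∑ j, X i j * v j) ^ 2 := by
  rw [← mulVec_mulVec, dotProduct_mulVec, vecMul_transpose]
  simp only [dotProduct, mulVec, dotProduct]
  congr 1
  ext i
  ring

lemma rayleigh_bound (n p : ℕ) (X : Matrix (Fin n) (Fin p) ℝ)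
    (hH : (Xᵀ * X).IsHermitian) (v : Fin p → ℝ) (hp : 1 ≤ p) :
    ∑ i, (∑ j, X i j * v j) ^ 2 ≤ (⨆ i, hH.eigenvalues i) * ∑ j, (v j) ^ 2 := by
  have : Nonempty (Fin p) := ⟨⟨0, hp⟩⟩
  set M := ⨆ i, hH.eigenvalues i with hM
  rw [← quad_eq]
  have hspec := hH.spectral_theorem
  set U : Matrix (Fin p) (Fin p) ℝ := (hH.eigenvectorUnitary : Matrix (Fin p) (Fin p) ℝ) with hU
  have hdiag : Matrix.diagonal (RCLike.ofReal ∘ hH.eigenvalues) = Matrix.diagonal hH.eigenvalues := by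
    congr 1
  have hvU : v ᵥ* U = Uᵀ *ᵥ v := by rw [← vecMul_transpose, transpose_transpose]
  have hstar : star U = Uᵀ := by
    rw [Matrix.star_eq_conjTranspose, Matrix.conjTranspose_eq_transpose_of_trivial]
  set w : Fin p → ℝ := Uᵀ *ᵥ v with hw
  have key : v ⬝ᵥ ((Xᵀ * X) *ᵥ v) = ∑ i, hH.eigenvalues i * (w i) ^ 2 := by
    conv_lhs => rw [hspec, Unitary.conjStarAlgAut_apply]
    rw [hdiag, hstar, ← mulVec_mulVec, ← mulVec_mulVec, dotProduct_mulVec, hvU, ← hw]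
    simp [mulVec_diagonal, dotProduct]
    congr 1; ext i; ring
  have hnorm : ∑ i, (w i) ^ 2 = ∑ j, (v j) ^ 2 := by
    have h1 : ∑ i, (w i) ^ 2 = w ⬝ᵥ w := by simp [dotProduct, sq]
    have h2 : ∑ j, (v j) ^ 2 = v ⬝ᵥ v := by simp [dotProduct, sq]
    have hUU : U * Uᵀ = 1 := by
      have := (Matrix.mem_unitaryGroup_iff).mp hH.eigenvectorUnitary.2
      rwa [hstar] at this
    have h3 : v ⬝ᵥ ((U * Uᵀ) *ᵥ v) = w ⬝ᵥ w := by
      rw [← mulVec_mulVec, dotProduct_mulVec, hvU]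
    rw [h1, h2, ← h3, hUU, one_mulVec]
  rw [key, ← hnorm, Finset.mul_sum]
  apply Finset.sum_le_sum
  intro i _
  have hle : hH.eigenvalues i ≤ M := by
    apply le_ciSup (Set.Finite.bddAbove (Set.finite_range _))
  have := sq_nonneg (w i)
  nlinarith

lemma eigen_nonneg (n p : ℕ) (X : Matrix (Fin n) (Fin p) ℝ)
    (hH : (Xᵀ * X).IsHermitian) (i : Fin p) : 0 ≤ hH.eigenvalues i := by
  have h := hH.eigenvalues_eq i
  set b : Fin p → ℝ := ⇑(hH.eigenvectorBasis i) with hb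
  have hsb : star b = b := by simp
  rw [hsb] at h
  rw [h]
  simp only [RCLike.re_to_real]
  rw [quad_eq]
  positivity


lemma term_nonneg (yv z : ℝ) (hy : yv = 0 ∨ yv = 1) :
    0 ≤ Real.log (1 + Real.exp z) - yv * z := by
  have he := Real.exp_pos z
  rcases hy with h | h
  · rw [h]
    simp only [zero_mul, sub_zero]
    exact Real.log_nonneg (by linarith)
  · rw [h, one_mul, sub_nonneg]
    rw [Real.le_log_iff_exp_le (by linarith)]
    linarith

lemma per_i (yv α γ a b : ℝ) (ha : 0 ≤ a) (hb : 0 ≤ b) (hab : a + b = 1) :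
    a * (Real.log (1 + Real.exp α) - yv * α) + b * (Real.log (1 + Real.exp γ) - yv * γ)
      ≤ (Real.log (1 + Real.exp (a * α + b * γ)) - yv * (a * α + b * γ))
        + a * b / 8 * (α - γ) ^ 2 := by
  have hψ := psi_concave.2 (Set.mem_univ α) (Set.mem_univ γ) ha hb hab
  simp only [smul_eq_mul, psiAux] at hψ
  have hq : a * α ^ 2 + b * γ ^ 2 = (a * α + b * γ) ^ 2 + a * b * (α - γ) ^ 2 := by
    have hb' : b = 1 - a := by linarith
    subst hb'; ring
  linarith [hψ, hq]

lemma main_ineq (n p : ℕ) (hn : 1 ≤ n) (X : Matrix (Fin n) (Fin p) ℝ) (y : Fin n → ℝ)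
    (δ lam : ℝ) (t s : Fin p → ℝ) (a b : ℝ) (ha : 0 ≤ a) (hb : 0 ≤ b) (hab : a + b = 1)
    (β0 : ℝ) (β : Fin p → ℝ)
    (hQle : ∑ i, (∑ j, X i j * ((t j - s j) * β j)) ^ 2
      ≤ 8 * (n : ℝ) * δ * ∑ j, (t j - s j) ^ 2 * (β j) ^ 2) :
    a * hObj n p X y δ lam t β0 β + b * hObj n p X y δ lam s β0 β
      ≤ hObj n p X y δ lam (a • t + b • s) β0 β := by
  obtain rfl : b = 1 - a := by linarith
  simp only [hObj, negLogLik, Pi.add_apply, Pi.smul_apply, smul_eq_mul]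
  set St := ∑ i, (Real.log (1 + Real.exp (β0 + ∑ j, X i j * (t j * β j)))
      - y i * (β0 + ∑ j, X i j * (t j * β j))) with hSt
  set Ss := ∑ i, (Real.log (1 + Real.exp (β0 + ∑ j, X i j * (s j * β j)))
      - y i * (β0 + ∑ j, X i j * (s j * β j))) with hSs
  set Su := ∑ i, (Real.log (1 + Real.exp (β0 + ∑ j, X i j * ((a * t j + (1 - a) * s j) * β j)))
      - y i * (β0 + ∑ j, X i j * ((a * t j + (1 - a) * s j) * β j))) with hSu
  set Q := ∑ i, (∑ j, X i j * ((t j - s j) * β j)) ^ 2 with hQ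
  set R := ∑ j, (t j - s j) ^ 2 * (β j) ^ 2 with hR
  have hab' : a ≤ 1 := by linarith
  have hA : a * St + (1 - a) * Ss ≤ Su + (a * (1 - a) / 8) * Q := by
    rw [hSt, hSs, hSu, hQ, Finset.mul_sum, Finset.mul_sum, ← Finset.sum_add_distrib,
      Finset.mul_sum, ← Finset.sum_add_distrib]
    apply Finset.sum_le_sum
    intro i _
    have e1 : ∑ j, X i j * ((a * t j + (1 - a) * s j) * β j)
        = a * ∑ j, X i j * (t j * β j) + (1 - a) * ∑ j, X i j * (s j * β j) := by
      rw [Finset.mul_sum, Finset.mul_sum, ← Finset.sum_add_distrib]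
      exact Finset.sum_congr rfl fun j _ => by ring
    have hz : β0 + ∑ j, X i j * ((a * t j + (1 - a) * s j) * β j)
        = a * (β0 + ∑ j, X i j * (t j * β j)) + (1 - a) * (β0 + ∑ j, X i j * (s j * β j)) := by
      rw [e1]; ring
    have hd : ∑ j, X i j * ((t j - s j) * β j)
        = (β0 + ∑ j, X i j * (t j * β j)) - (β0 + ∑ j, X i j * (s j * β j)) := by
      rw [add_sub_add_left_eq_sub, ← Finset.sum_sub_distrib]
      exact Finset.sum_congr rfl fun j _ => by ring
    rw [hz, hd]
    exact per_i (y i) _ _ a (1 - a) ha hb (by ring)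
  have hB : ∑ x, (1 - (a * t x + (1 - a) * s x) ^ 2) * (β x) ^ 2
      = a * ∑ j, (1 - (t j) ^ 2) * (β j) ^ 2 + (1 - a) * ∑ j, (1 - (s j) ^ 2) * (β j) ^ 2
        + a * (1 - a) * R := by
    rw [hR, Finset.mul_sum, Finset.mul_sum, Finset.mul_sum, ← Finset.sum_add_distrib,
      ← Finset.sum_add_distrib]
    exact Finset.sum_congr rfl fun j _ => by ring
  have hn0 : (0:ℝ) < (n : ℝ) := by exact_mod_cast hn
  have hQnn : 0 ≤ Q := by rw [hQ]; positivity
  have hprod : 0 ≤ a * (1 - a) := mul_nonneg ha hb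
  have hcQ : 1 / (n:ℝ) * ((a * (1 - a) / 8) * Q) ≤ a * (1 - a) * δ * R := by
    have h1 : (a * (1 - a) / 8) * Q ≤ (a * (1 - a) / 8) * (8 * (n:ℝ) * δ * R) :=
      mul_le_mul_of_nonneg_left hQle (by linarith)
    calc 1 / (n:ℝ) * ((a * (1 - a) / 8) * Q)
        ≤ 1 / (n:ℝ) * ((a * (1 - a) / 8) * (8 * (n:ℝ) * δ * R)) := by
          apply mul_le_mul_of_nonneg_left h1 (by positivity)
      _ = a * (1 - a) * δ * R := by field_simp
  have hA' : 1 / (n:ℝ) * (a * St + (1 - a) * Ss) ≤ 1 / (n:ℝ) * (Su + (a * (1 - a) / 8) * Q) :=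
    mul_le_mul_of_nonneg_left hA (by positivity)
  rw [hB]
  nlinarith [hA', hcQ]

end Aux

open Matrix in
/-- if `δ ≥ ν_max/(8n)`, where `ν_max` is the largest eigenvalue of `XᵀX`,
then for every `λ ≥ 0` the value function `f_{δ,λ}` is concave on `[0,1]^p`. -/
theorem stmt3 (n p : ℕ) (hn : 1 ≤ n) (hp : 1 ≤ p)
    (X : Matrix (Fin n) (Fin p) ℝ) (y : Fin n → ℝ) (hy : ∀ i, y i = 0 ∨ y i = 1)
    (hH : (Xᵀ * X).IsHermitian)
    (δ : ℝ) (hδ : (⨆ i, hH.eigenvalues i) / (8 * (n : ℝ)) ≤ δ)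
    (lam : ℝ) (hlam : 0 ≤ lam) :
    ConcaveOn ℝ {t : Fin p → ℝ | ∀ j, 0 ≤ t j ∧ t j ≤ 1}
      (fun t => fVal n p X y δ lam t) := by
  have hpne : Nonempty (Fin p) := ⟨⟨0, hp⟩⟩
  have hn0 : (0:ℝ) < (n : ℝ) := by exact_mod_cast hn
  set M := ⨆ i, hH.eigenvalues i with hM
  have hM0 : 0 ≤ M := by
    refine le_trans (eigen_nonneg n p X hH ⟨0, hp⟩) ?_
    exact le_ciSup (Set.Finite.bddAbove (Set.finite_range _)) _
  have hδ0 : 0 ≤ δ := le_trans (by positivity) hδ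
  -- nonnegativity of hObj on the box
  have hnonneg : ∀ t : Fin p → ℝ, (∀ j, 0 ≤ t j ∧ t j ≤ 1) →
      ∀ b : ℝ × (Fin p → ℝ), 0 ≤ hObj n p X y δ lam t b.1 b.2 := by
    intro t ht b
    simp only [hObj, negLogLik]
    have h1 : 0 ≤ (1 / (n:ℝ)) * ∑ i, (Real.log (1 + Real.exp (b.1 + ∑ j, X i j * (t j * b.2 j)))
        - y i * (b.1 + ∑ j, X i j * (t j * b.2 j))) := by
      apply mul_nonneg (by positivity)
      apply Finset.sum_nonneg
      intro i _
      exact term_nonneg (y i) _ (hy i)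
    have h2 : 0 ≤ lam * ∑ j, (b.2 j) ^ 2 := by positivity
    have h3 : 0 ≤ δ * ∑ j, (1 - (t j) ^ 2) * (b.2 j) ^ 2 := by
      apply mul_nonneg hδ0
      apply Finset.sum_nonneg
      intro j _
      apply mul_nonneg _ (sq_nonneg _)
      have := (ht j).1; have := (ht j).2
      nlinarith
    linarith
  have hbdd : ∀ t : Fin p → ℝ, (∀ j, 0 ≤ t j ∧ t j ≤ 1) →
      BddBelow (Set.range fun b : ℝ × (Fin p → ℝ) => hObj n p X y δ lam t b.1 b.2) := by
    intro t ht
    refine ⟨0, ?_⟩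
    rintro x ⟨b, rfl⟩
    exact hnonneg t ht b
  constructor
  · -- convexity of the box
    intro x hx z hz a b ha hb hab
    intro j
    have hxj := hx j; have hzj := hz j
    simp only [Pi.add_apply, Pi.smul_apply, smul_eq_mul]
    constructor
    · have : 0 ≤ a * x j := mul_nonneg ha hxj.1
      have : 0 ≤ b * z j := mul_nonneg hb hzj.1
      linarith
    · have h1 : a * x j ≤ a * 1 := mul_le_mul_of_nonneg_left hxj.2 ha
      have h2 : b * z j ≤ b * 1 := mul_le_mul_of_nonneg_left hzj.2 hb
      linarith [h1, h2]
  · intro t ht s hs a b ha hb hab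
    simp only [smul_eq_mul, fVal]
    apply le_ciInf
    intro bb
    have h1 : (⨅ b' : ℝ × (Fin p → ℝ), hObj n p X y δ lam t b'.1 b'.2)
        ≤ hObj n p X y δ lam t bb.1 bb.2 := ciInf_le (hbdd t ht) bb
    have h2 : (⨅ b' : ℝ × (Fin p → ℝ), hObj n p X y δ lam s b'.1 b'.2)
        ≤ hObj n p X y δ lam s bb.1 bb.2 := ciInf_le (hbdd s hs) bb
    have hQle : ∑ i, (∑ j, X i j * ((t j - s j) * bb.2 j)) ^ 2
        ≤ 8 * (n : ℝ) * δ * ∑ j, (t j - s j) ^ 2 * (bb.2 j) ^ 2 := by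
      have hr := rayleigh_bound n p X hH (fun j => (t j - s j) * bb.2 j) hp
      have heq : ∑ j, ((t j - s j) * bb.2 j) ^ 2 = ∑ j, (t j - s j) ^ 2 * (bb.2 j) ^ 2 :=
        Finset.sum_congr rfl fun j _ => by ring
      rw [heq] at hr
      refine le_trans hr ?_
      have hRnn : 0 ≤ ∑ j, (t j - s j) ^ 2 * (bb.2 j) ^ 2 := by positivity
      have hMle : M ≤ 8 * (n:ℝ) * δ := by
        rw [div_le_iff₀ (by positivity)] at hδ
        calc M ≤ δ * (8 * (n:ℝ)) := hδ
          _ = 8 * (n:ℝ) * δ := by ring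
      exact mul_le_mul_of_nonneg_right hMle hRnn
    have hmain := main_ineq n p hn X y δ lam t s a b ha hb hab bb.1 bb.2 hQle
    have h1' : a * (⨅ b' : ℝ × (Fin p → ℝ), hObj n p X y δ lam t b'.1 b'.2)
        ≤ a * hObj n p X y δ lam t bb.1 bb.2 := mul_le_mul_of_nonneg_left h1 ha
    have h2' : b * (⨅ b' : ℝ × (Fin p → ℝ), hObj n p X y δ lam s b'.1 b'.2)
        ≤ b * hObj n p X y δ lam s bb.1 bb.2 := mul_le_mul_of_nonneg_left h2 hb
    linarith
end

section
/- Suppose the binary response is not constant, i.e., there exist indices i, i' with y_i = 1 and y_{i'} = 0. Then for every interior point t ∈ (0,1)^p, every δ > 0 and λ ≥ 0, the function (β₀, β) ↦ h_{δ,λ}(t, β₀, β) attains its infimum over ℝ × ℝ^p; that is, there exists (β̃₀, β̃) with h_{δ,λ}(t, β̃₀, β̃) = f_{δ,λ}(t). -/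
set_option maxHeartbeats 1000000 in
/-- if the binary response is not constant, then for every interior
`t ∈ (0,1)^p`, `δ > 0` and `λ ≥ 0`, the function `(β₀, β) ↦ h_{δ,λ}(t, β₀, β)` attains
its infimum over `ℝ × ℝ^p`. -/
theorem stmt14 (n p : ℕ) (hn : 1 ≤ n) (hp : 1 ≤ p)
    (X : Matrix (Fin n) (Fin p) ℝ) (y : Fin n → ℝ) (hy : ∀ i, y i = 0 ∨ y i = 1)
    (hy1 : ∃ i, y i = 1) (hy0 : ∃ i', y i' = 0)
    (t : Fin p → ℝ) (ht : ∀ j, 0 < t j ∧ t j < 1)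
    (lam δ : ℝ) (hlam : 0 ≤ lam) (hδ : 0 < δ) :
    ∃ b : ℝ × (Fin p → ℝ), hObj n p X y δ lam t b.1 b.2 = fVal n p X y δ lam t := by
  obtain ⟨i1, hi1⟩ := hy1
  obtain ⟨i0, hi0⟩ := hy0
  have hne : i1 ≠ i0 := fun h => by rw [h, hi0] at hi1; norm_num at hi1
  have hpn : Nonempty (Fin p) := Fin.pos_iff_nonempty.mp hp
  have hn0 : (0:ℝ) < (n:ℝ) := by exact_mod_cast Nat.lt_of_lt_of_le Nat.zero_lt_one hn
  set F : ℝ × (Fin p → ℝ) → ℝ := fun b => hObj n p X y δ lam t b.1 b.2 with hF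
  -- continuity
  have hlin : ∀ i : Fin n, Continuous (fun b : ℝ × (Fin p → ℝ) =>
      b.1 + ∑ j, X i j * (t j * b.2 j)) := fun i =>
    continuous_fst.add (continuous_finset_sum _ fun j _ =>
      continuous_const.mul (continuous_const.mul ((continuous_apply j).comp continuous_snd)))
  have hcont : Continuous F := by
    simp only [hF, hObj, negLogLik]
    refine ((Continuous.add ?_ ?_).add ?_)
    · refine continuous_const.mul (continuous_finset_sum _ fun i _ => Continuous.sub ?_ ?_)
      · exact Continuous.log (continuous_const.add (hlin i).rexp)
          (fun b => by positivity)
      · exact continuous_const.mul (hlin i)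
    · exact continuous_const.mul (continuous_finset_sum _ fun j _ =>
        (((continuous_apply j).comp continuous_snd).pow 2))
    · exact continuous_const.mul (continuous_finset_sum _ fun j _ =>
        (continuous_const.mul (((continuous_apply j).comp continuous_snd).pow 2)))
  -- constants
  set c0 : ℝ := Finset.univ.inf' (Finset.univ_nonempty) (fun j => 1 - t j ^ 2) with hc0def
  have hc0 : 0 < c0 := by
    rw [hc0def, Finset.lt_inf'_iff]
    intro j _
    nlinarith [(ht j).1, (ht j).2]
  have hc0le : ∀ j : Fin p, c0 ≤ 1 - t j ^ 2 := fun j =>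
    Finset.inf'_le _ (Finset.mem_univ j)
  set C : ℝ := (∑ j, |X i1 j|) + (∑ j, |X i0 j|) with hCdef
  have hC1 : (0:ℝ) ≤ ∑ j, |X i1 j| := Finset.sum_nonneg fun j _ => abs_nonneg _
  have hC0 : (0:ℝ) ≤ ∑ j, |X i0 j| := Finset.sum_nonneg fun j _ => abs_nonneg _
  have hCnn : 0 ≤ C := by rw [hCdef]; linarith
  set e : ℝ := δ * c0 with hedef
  have he : 0 < e := mul_pos hδ hc0
  set K : ℝ := (C / n) ^ 2 / (2 * e) with hKdef
  have hKnn : 0 ≤ K := by positivity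
  set a : ℝ := min (1 / (n:ℝ)) (e / 2) with hadef
  have ha : 0 < a := lt_min (by positivity) (by positivity)
  -- key lower bound
  have hfb : ∀ b : ℝ × (Fin p → ℝ), a * ‖b‖ - (a + K) ≤ F b := by
    intro ⟨β0, β⟩
    -- linear form bounds
    have hlinbd : ∀ i : Fin n, |∑ j, X i j * (t j * β j)| ≤ (∑ j, |X i j|) * ‖β‖ := by
      intro i
      calc |∑ j, X i j * (t j * β j)| ≤ ∑ j, |X i j * (t j * β j)| :=
            Finset.abs_sum_le_sum_abs _ _
        _ ≤ ∑ j, |X i j| * ‖β‖ := by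
            refine Finset.sum_le_sum fun j _ => ?_
            rw [abs_mul, abs_mul]
            refine mul_le_mul_of_nonneg_left ?_ (abs_nonneg _)
            have h1 : |t j| ≤ 1 := by rw [abs_of_pos (ht j).1]; exact le_of_lt (ht j).2
            have h2 : |β j| ≤ ‖β‖ := norm_le_pi_norm β j
            calc |t j| * |β j| ≤ 1 * ‖β‖ :=
                  mul_le_mul h1 h2 (abs_nonneg _) zero_le_one
              _ = ‖β‖ := one_mul _
        _ = (∑ j, |X i j|) * ‖β‖ := by rw [Finset.sum_mul]
    set u : Fin n → ℝ := fun i => β0 + ∑ j, X i j * (t j * β j) with hudef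
    set T : Fin n → ℝ := fun i => Real.log (1 + Real.exp (u i)) - y i * u i with hTdef
    have hlog0 : ∀ v : ℝ, 0 ≤ Real.log (1 + Real.exp v) := fun v =>
      Real.log_nonneg (by linarith [Real.exp_pos v])
    have hlogv : ∀ v : ℝ, v ≤ Real.log (1 + Real.exp v) := fun v => by
      calc v = Real.log (Real.exp v) := (Real.log_exp v).symm
        _ ≤ Real.log (1 + Real.exp v) :=
            Real.log_le_log (Real.exp_pos v) (by linarith)
    have hT0 : ∀ i, 0 ≤ T i := by
      intro i
      rcases hy i with h | h <;> simp only [hTdef, h, zero_mul, one_mul, sub_zero]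
      · exact hlog0 _
      · linarith [hlogv (u i)]
    have hT1 : -(u i1) ≤ T i1 := by
      simp only [hTdef, hi1, one_mul]
      linarith [hlog0 (u i1)]
    have hT2 : u i0 ≤ T i0 := by
      simp only [hTdef, hi0, zero_mul, sub_zero]
      exact hlogv _
    have hsum : T i1 + T i0 ≤ ∑ i, T i := by
      have h := Finset.sum_le_sum_of_subset_of_nonneg
        (Finset.subset_univ ({i1, i0} : Finset (Fin n))) (fun i _ _ => hT0 i)
      rwa [Finset.sum_pair hne] at h
    have hu1 : -β0 - C * ‖β‖ ≤ -(u i1) := by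
      have h := (abs_le.mp (hlinbd i1)).2
      have hβnn : (0:ℝ) ≤ ‖β‖ := norm_nonneg β
      simp only [hudef]
      nlinarith [mul_nonneg hC0 hβnn]
    have hu0 : β0 - C * ‖β‖ ≤ u i0 := by
      have h := (abs_le.mp (hlinbd i0)).1
      have hβnn : (0:ℝ) ≤ ‖β‖ := norm_nonneg β
      simp only [hudef]
      nlinarith [mul_nonneg hC1 hβnn]
    have habs : |β0| - C * ‖β‖ ≤ T i1 + T i0 := by
      rcases abs_cases β0 with ⟨h, _⟩ | ⟨h, _⟩ <;> rw [h]
      · linarith [hT0 i1]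
      · linarith [hT0 i0]
    have hL : (1 / (n:ℝ)) * (|β0| - C * ‖β‖) ≤
        negLogLik n p X y β0 (fun j => t j * β j) := by
      unfold negLogLik
      refine mul_le_mul_of_nonneg_left ?_ (by positivity)
      calc |β0| - C * ‖β‖ ≤ T i1 + T i0 := habs
        _ ≤ ∑ i, T i := hsum
        _ = ∑ i, (Real.log (1 + Real.exp (β0 + ∑ j, X i j * (t j * β j)))
              - y i * (β0 + ∑ j, X i j * (t j * β j))) := rfl
    -- quadratic bounds
    have hnormsq : ‖β‖ ^ 2 ≤ ∑ j, (β j) ^ 2 := by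
      have hS : (0:ℝ) ≤ ∑ j, (β j) ^ 2 := Finset.sum_nonneg fun j _ => sq_nonneg _
      have hb : ‖β‖ ≤ Real.sqrt (∑ j, (β j) ^ 2) := by
        refine (pi_norm_le_iff_of_nonneg (Real.sqrt_nonneg _)).mpr fun j => ?_
        rw [Real.norm_eq_abs, ← Real.sqrt_sq_eq_abs]
        exact Real.sqrt_le_sqrt (Finset.single_le_sum (fun j _ => sq_nonneg (β j))
          (Finset.mem_univ j))
      calc ‖β‖ ^ 2 ≤ Real.sqrt (∑ j, (β j) ^ 2) ^ 2 :=
            pow_le_pow_left₀ (norm_nonneg β) hb 2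
        _ = ∑ j, (β j) ^ 2 := Real.sq_sqrt hS
    have hδterm : e * ‖β‖ ^ 2 ≤ δ * ∑ j, (1 - t j ^ 2) * (β j) ^ 2 := by
      have h1 : c0 * ∑ j, (β j) ^ 2 ≤ ∑ j, (1 - t j ^ 2) * (β j) ^ 2 := by
        rw [Finset.mul_sum]
        exact Finset.sum_le_sum fun j _ =>
          mul_le_mul_of_nonneg_right (hc0le j) (sq_nonneg _)
      have h2 : c0 * ‖β‖ ^ 2 ≤ c0 * ∑ j, (β j) ^ 2 :=
        mul_le_mul_of_nonneg_left hnormsq (le_of_lt hc0)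
      calc e * ‖β‖ ^ 2 = δ * (c0 * ‖β‖ ^ 2) := by rw [hedef]; ring
        _ ≤ δ * ∑ j, (1 - t j ^ 2) * (β j) ^ 2 := by
            refine mul_le_mul_of_nonneg_left ?_ (le_of_lt hδ)
            linarith
    have hlam' : 0 ≤ lam * ∑ j, (β j) ^ 2 :=
      mul_nonneg hlam (Finset.sum_nonneg fun j _ => sq_nonneg _)
    -- combine
    have hcomb : (1 / (n:ℝ)) * |β0| + e * ‖β‖ ^ 2 - (C / n) * ‖β‖ ≤ F (β0, β) := by
      simp only [hF, hObj]
      have : (1 / (n:ℝ)) * |β0| - (C / n) * ‖β‖ =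
          (1 / (n:ℝ)) * (|β0| - C * ‖β‖) := by ring
      linarith [hL, hδterm, hlam']
    have hquad : (e / 2) * ‖β‖ ^ 2 - K ≤ e * ‖β‖ ^ 2 - (C / n) * ‖β‖ := by
      have h1 : e * ‖β‖ ^ 2 - (C / n) * ‖β‖ - ((e / 2) * ‖β‖ ^ 2 - K) =
          (e * ‖β‖ - C / n) ^ 2 / (2 * e) := by
        rw [hKdef]; field_simp; ring
      have h2 : 0 ≤ (e * ‖β‖ - C / n) ^ 2 / (2 * e) := by positivity
      linarith
    have hnb : ‖(β0, β)‖ - 1 ≤ |β0| + ‖β‖ ^ 2 := by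
      have hn1 : ‖(β0, β)‖ = max |β0| ‖β‖ := by
        rw [Prod.norm_def, Real.norm_eq_abs]
      rw [hn1]
      rcases max_cases |β0| ‖β‖ with ⟨h, _⟩ | ⟨h, _⟩ <;> rw [h]
      · nlinarith [sq_nonneg ‖β‖]
      · nlinarith [sq_nonneg (‖β‖ - 1), abs_nonneg β0]
    have hamin1 : a ≤ 1 / (n:ℝ) := min_le_left _ _
    have hamin2 : a ≤ e / 2 := min_le_right _ _
    have habsnn : (0:ℝ) ≤ |β0| := abs_nonneg _
    have hsqnn : (0:ℝ) ≤ ‖β‖ ^ 2 := sq_nonneg _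
    calc a * ‖(β0, β)‖ - (a + K) = a * (‖(β0, β)‖ - 1) - K := by ring
      _ ≤ a * (|β0| + ‖β‖ ^ 2) - K :=
          sub_le_sub_right (mul_le_mul_of_nonneg_left hnb (le_of_lt ha)) K
      _ ≤ (1 / (n:ℝ)) * |β0| + (e / 2) * ‖β‖ ^ 2 - K := by nlinarith
      _ ≤ (1 / (n:ℝ)) * |β0| + (e * ‖β‖ ^ 2 - (C / n) * ‖β‖) := by linarith
      _ ≤ F (β0, β) := by linarith [hcomb]
  -- coercivity
  have hcoer : Filter.Tendsto F (Filter.cocompact _) Filter.atTop := by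
    refine Filter.tendsto_atTop_mono hfb ?_
    have h1 : Filter.Tendsto (fun b : ℝ × (Fin p → ℝ) => a * ‖b‖)
        (Filter.cocompact _) Filter.atTop :=
      (tendsto_norm_cocompact_atTop).const_mul_atTop ha
    have h2 := Filter.tendsto_atTop_add_const_right (Filter.cocompact (ℝ × (Fin p → ℝ)))
      (-(a + K)) h1
    simpa [sub_eq_add_neg] using h2
  obtain ⟨b, hb⟩ := hcont.exists_forall_le hcoer
  refine ⟨b, ?_⟩
  have h1 : fVal n p X y δ lam t ≤ F b := ciInf_le ⟨F b, by
    rintro x ⟨b', rfl⟩; exact hb b'⟩ b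
  have h2 : F b ≤ fVal n p X y δ lam t := le_ciInf fun b' => hb b'
  exact le_antisymm h2 h1
end

section
/- At binary corners the relaxation is exact: for every s ∈ {0,1}^p, every δ > 0 and λ ≥ 0, the value function satisfies f_{δ,λ}(s) = inf over (β₀, β) ∈ ℝ × ℝ^p with β_j = 0 for every j with s_j = 0, of L(β₀, β) + λ ‖β‖₂². In other words, the relaxed objective evaluated at a binary selection vector s recovers exactly the ridge-penalized logistic fit restricted to the variables selected by s. -/
lemma negLogLik_nonneg (n p : ℕ) (X : Matrix (Fin n) (Fin p) ℝ) (y : Fin n → ℝ)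
    (hy : ∀ i, y i = 0 ∨ y i = 1) (β0 : ℝ) (β : Fin p → ℝ) :
    0 ≤ negLogLik n p X y β0 β := by
  unfold negLogLik
  apply mul_nonneg (by positivity)
  apply Finset.sum_nonneg
  intro i _
  set z : ℝ := β0 + ∑ j, X i j * β j with hz
  have hez : Real.exp z ≤ 1 + Real.exp z := by linarith
  rcases hy i with h | h
  · rw [h, zero_mul, sub_zero]
    apply Real.log_nonneg
    have := Real.exp_pos z
    linarith
  · rw [h, one_mul, sub_nonneg]
    calc z = Real.log (Real.exp z) := (Real.log_exp z).symm
    _ ≤ Real.log (1 + Real.exp z) := Real.log_le_log (Real.exp_pos z) hez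

/-- at binary corners the relaxation is exact: for `s ∈ {0,1}^p`, `δ > 0`
and `λ ≥ 0`, `f_{δ,λ}(s)` equals the infimum of `L(β₀, β) + λ‖β‖₂²` over all `(β₀, β)`
with `β_j = 0` whenever `s_j = 0`. -/
theorem stmt17 (n p : ℕ) (hn : 1 ≤ n) (hp : 1 ≤ p)
    (X : Matrix (Fin n) (Fin p) ℝ) (y : Fin n → ℝ) (hy : ∀ i, y i = 0 ∨ y i = 1)
    (s : Fin p → ℝ) (hs : ∀ j, s j = 0 ∨ s j = 1)
    (lam δ : ℝ) (hlam : 0 ≤ lam) (hδ : 0 < δ) :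
    fVal n p X y δ lam s
      = sInf ((fun b : ℝ × (Fin p → ℝ) =>
            negLogLik n p X y b.1 b.2 + lam * ∑ j, (b.2 j) ^ 2) ''
          {b : ℝ × (Fin p → ℝ) | ∀ j, s j = 0 → b.2 j = 0}) := by
  set g : ℝ × (Fin p → ℝ) → ℝ := fun b =>
    negLogLik n p X y b.1 b.2 + lam * ∑ j, (b.2 j) ^ 2 with hg
  set S := g '' {b : ℝ × (Fin p → ℝ) | ∀ j, s j = 0 → b.2 j = 0} with hS
  have hgnn : ∀ b, 0 ≤ g b := by
    intro b
    have h1 := negLogLik_nonneg n p X y hy b.1 b.2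
    have h2 : 0 ≤ lam * ∑ j, (b.2 j) ^ 2 := by positivity
    simp only [hg]; linarith
  have hδnn : ∀ β : Fin p → ℝ, 0 ≤ δ * ∑ j, (1 - (s j) ^ 2) * (β j) ^ 2 := by
    intro β
    apply mul_nonneg hδ.le
    apply Finset.sum_nonneg
    intro j _
    apply mul_nonneg _ (sq_nonneg _)
    rcases hs j with h | h <;> rw [h] <;> norm_num
  have hhnn : ∀ b : ℝ × (Fin p → ℝ), 0 ≤ hObj n p X y δ lam s b.1 b.2 := by
    intro b
    have h1 := negLogLik_nonneg n p X y hy b.1 (fun j => s j * b.2 j)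
    have h2 : 0 ≤ lam * ∑ j, (b.2 j) ^ 2 := by positivity
    have h3 := hδnn b.2
    unfold hObj; linarith
  have hbdd1 : BddBelow (Set.range fun b : ℝ × (Fin p → ℝ) => hObj n p X y δ lam s b.1 b.2) := by
    refine ⟨0, ?_⟩; rintro _ ⟨b, rfl⟩; exact hhnn b
  have hbdd2 : BddBelow S := by
    refine ⟨0, ?_⟩; rintro _ ⟨b, _, rfl⟩; exact hgnn b
  have hSne : S.Nonempty := ⟨g (0, 0), ⟨(0, 0), fun j _ => rfl, rfl⟩⟩
  -- for constrained b, hObj = g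
  have heq : ∀ b : ℝ × (Fin p → ℝ), (∀ j, s j = 0 → b.2 j = 0) →
      hObj n p X y δ lam s b.1 b.2 = g b := by
    intro b hb
    have hfun : (fun j => s j * b.2 j) = b.2 := by
      funext j
      rcases hs j with h | h
      · rw [h, zero_mul, hb j h]
      · rw [h, one_mul]
    have hδ0 : ∑ j, (1 - (s j) ^ 2) * (b.2 j) ^ 2 = 0 := by
      apply Finset.sum_eq_zero
      intro j _
      rcases hs j with h | h
      · rw [hb j h]; ring
      · rw [h]; ring
    unfold hObj
    rw [hfun, hδ0, mul_zero, add_zero]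
  refine le_antisymm ?_ ?_
  · apply le_csInf hSne
    rintro a ⟨b, hb, rfl⟩
    have := ciInf_le hbdd1 b
    rw [← heq b hb]
    exact this
  · apply le_ciInf
    intro b
    set b' : ℝ × (Fin p → ℝ) := (b.1, fun j => s j * b.2 j) with hb'
    have hmem : b' ∈ {b : ℝ × (Fin p → ℝ) | ∀ j, s j = 0 → b.2 j = 0} := by
      intro j hj
      show s j * b.2 j = 0
      rw [hj, zero_mul]
    have hfun : (fun j => s j * (s j * b.2 j)) = fun j => s j * b.2 j := by
      funext j
      rcases hs j with h | h <;> rw [h] <;> ring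
    have hsum : ∑ j, (s j * b.2 j) ^ 2 ≤ ∑ j, (b.2 j) ^ 2 := by
      apply Finset.sum_le_sum
      intro j _
      rcases hs j with h | h
      · rw [h]; simpa using sq_nonneg (b.2 j)
      · rw [h, one_mul]
    have hle : g b' ≤ hObj n p X y δ lam s b.1 b.2 := by
      have h3 := hδnn b.2
      have : lam * ∑ j, (s j * b.2 j) ^ 2 ≤ lam * ∑ j, (b.2 j) ^ 2 :=
        mul_le_mul_of_nonneg_left hsum hlam
      simp only [hg, hb']
      unfold hObj
      linarith
    exact le_trans (csInf_le hbdd2 ⟨b', hmem, rfl⟩) hle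
end
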